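/- Let H be a finite simple connected graph that is not isomorphic to a cycle Cₙ for any n. Then every automorphism φ of the subdivision graph S(H) satisfies φ(V(H)) = V(H) and φ(V(S(H)) \ V(H)) = V(S(H)) \ V(H); that is, φ maps original vertices of H to original vertices and subdivision vertices to subdivision vertices. -/

import Mathlib

open SimpleGraph

/-- The middle graph `M(G)`: vertices are `V(G) ⊕ E(G)`; two edges are adjacent
iff they are distinct and share an endpoint; a vertex and an edge are adjacent
iff the vertex is incident to the edge. -/
def middleGraph {V : Type*} (G : SimpleGraph V) : SimpleGraph (V ⊕ G.edgeSet) :=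
  SimpleGraph.fromRel fun x y =>
    match x, y with
    | Sum.inr e, Sum.inr f => e ≠ f ∧ ∃ v, v ∈ (e : Sym2 V) ∧ v ∈ (f : Sym2 V)
    | Sum.inl v, Sum.inr e => v ∈ (e : Sym2 V)
    | _, _ => False

/-- The subdivision graph `S(G)`: vertices are `V(G) ⊕ E(G)`; `v ∈ V(G)` and
`e ∈ E(G)` are adjacent iff `v` is incident to `e`. -/
def subdivisionGraph {V : Type*} (G : SimpleGraph V) : SimpleGraph (V ⊕ G.edgeSet) :=
  SimpleGraph.fromRel fun x y =>
    match x, y with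
    | Sum.inl v, Sum.inr e => v ∈ (e : Sym2 V)
    | _, _ => False

/-- The endline graph `G⁺`: to each vertex `v` of `G` (coded `Sum.inl v`) we attach a new
pendant vertex (coded `Sum.inr v`) via a new (endline) edge. -/
def endlineGraph {V : Type*} (G : SimpleGraph V) : SimpleGraph (V ⊕ V) :=
  SimpleGraph.fromRel fun x y =>
    match x, y with
    | Sum.inl u, Sum.inl v => G.Adj u v
    | Sum.inl v, Sum.inr u => v = u
    | _, _ => False

/-- A vertex coloring is distinguishing if the only automorphism preserving it is the identity. -/
def IsDistinguishingVertexColoring {V α : Type*} (G : SimpleGraph V) (c : V → α) : Prop :=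
  ∀ φ : G ≃g G, (∀ v, c (φ v) = c v) → ∀ v, φ v = v

/-- A proper vertex coloring assigns different colors to adjacent vertices. -/
def IsProperVertexColoring {V α : Type*} (G : SimpleGraph V) (c : V → α) : Prop :=
  ∀ u v, G.Adj u v → c u ≠ c v

/-- The distinguishing number `D(G)`. -/
noncomputable def distinguishingNumber {V : Type*} (G : SimpleGraph V) : ℕ :=
  sInf {r | ∃ c : V → Fin r, IsDistinguishingVertexColoring G c}

/-- The distinguishing chromatic number `χ_D(G)`. -/
noncomputable def distinguishingChromaticNumber {V : Type*} (G : SimpleGraph V) : ℕ :=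
  sInf {r | ∃ c : V → Fin r,
    IsProperVertexColoring G c ∧ IsDistinguishingVertexColoring G c}

/-- An edge coloring is distinguishing if the only automorphism preserving it is the identity. -/
def IsDistinguishingEdgeColoring {V α : Type*} (G : SimpleGraph V) (c : G.edgeSet → α) : Prop :=
  ∀ φ : G ≃g G, (∀ e, c (φ.mapEdgeSet e) = c e) → ∀ v, φ v = v

/-- A proper edge coloring assigns different colors to distinct edges sharing an endpoint. -/
def IsProperEdgeColoring {V α : Type*} (G : SimpleGraph V) (c : G.edgeSet → α) : Prop :=
  ∀ e f : G.edgeSet, e ≠ f → (∃ v, v ∈ (e : Sym2 V) ∧ v ∈ (f : Sym2 V)) → c e ≠ c f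

/-- The distinguishing index `D'(G)`. -/
noncomputable def distinguishingIndex {V : Type*} (G : SimpleGraph V) : ℕ :=
  sInf {r | ∃ c : G.edgeSet → Fin r, IsDistinguishingEdgeColoring G c}

/-- The distinguishing chromatic index `χ'_D(G)`. -/
noncomputable def distinguishingChromaticIndex {V : Type*} (G : SimpleGraph V) : ℕ :=
  sInf {r | ∃ c : G.edgeSet → Fin r,
    IsProperEdgeColoring G c ∧ IsDistinguishingEdgeColoring G c}

/-- The total distinguishing number `D''(G)`: the least `d` such that there is a (not
necessarily proper) coloring of vertices and edges with `d` colors preserved only by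
the identity automorphism. -/
noncomputable def totalDistinguishingNumber {V : Type*} (G : SimpleGraph V) : ℕ :=
  sInf {d | ∃ (cV : V → Fin d) (cE : G.edgeSet → Fin d),
    ∀ φ : G ≃g G,
      ((∀ v, cV (φ v) = cV v) ∧ (∀ e, cE (φ.mapEdgeSet e) = cE e)) → ∀ v, φ v = v}

lemma cycle_classify {V : Type*} [Finite V] (H : SimpleGraph V) (hconn : H.Connected)
    (hreg : ∀ v, (H.neighborSet v).ncard = 2) :
    ∃ m : ℕ, Nonempty (H ≃g cycleGraph m) := by
  classical
  -- the "other neighbor" function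
  have hother : ∀ u v : V, H.Adj v u → ∃ w, H.Adj v w ∧ w ≠ u ∧
      ∀ x, H.Adj v x → x ≠ u → x = w := by
    intro u v huv
    obtain ⟨a, b, hab, hset⟩ := Set.ncard_eq_two.mp (hreg v)
    have hu : u ∈ H.neighborSet v := huv
    rw [hset] at hu
    rcases hu with rfl | rfl
    · exact ⟨b, by
        have : b ∈ H.neighborSet v := by rw [hset]; right; rfl
        exact this, hab.symm, fun x hx hxu => by
          have : x ∈ H.neighborSet v := hx
          rw [hset] at this; rcases this with rfl | rfl; exact absurd rfl hxu; rfl⟩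
    · exact ⟨a, by
        have : a ∈ H.neighborSet v := by rw [hset]; left; rfl
        exact this, hab, fun x hx hxu => by
          have : x ∈ H.neighborSet v := hx
          rw [hset] at this; rcases this with rfl | rfl; rfl; exact absurd rfl hxu⟩
  choose! other ho_adj ho_ne ho_uniq using hother
  -- base point and its neighbor
  obtain ⟨x0⟩ := hconn.nonempty
  have hx0 : (H.neighborSet x0).Nonempty := by
    rw [← Set.ncard_pos (Set.toFinite _), hreg]; norm_num
  obtain ⟨x1, hx1⟩ := hx0
  -- the trajectory
  set F : ℕ → V × V := fun k => Nat.rec (x0, x1) (fun _ p => (p.2, other p.1 p.2)) k with hF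
  set f : ℕ → V := fun k => (F k).1 with hf
  have hFpair : ∀ k, F k = (f k, f (k + 1)) := fun k => rfl
  have hstep : ∀ k, f (k + 2) = other (f k) (f (k + 1)) := fun k => rfl
  have hadj : ∀ k, H.Adj (f k) (f (k + 1)) := by
    intro k; induction k with
    | zero => exact hx1
    | succ k ih => exact ho_adj (f k) (f (k+1)) ih.symm
  have hne2 : ∀ k, f (k + 2) ≠ f k :=
    fun k => ho_ne (f k) (f (k+1)) (hadj k).symm
  have hback : ∀ k, f k = other (f (k + 2)) (f (k + 1)) :=
    fun k => ho_uniq (f (k+2)) (f (k+1)) (hadj (k+1)) (f k) (hadj k).symm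
      (fun h => hne2 k h.symm)
  have hFinj : ∀ a b, F (a + 1) = F (b + 1) → F a = F b := by
    intro a b h
    have h1 : f (a + 1) = f (b + 1) := congrArg Prod.fst h
    have h2 : f (a + 2) = f (b + 2) := congrArg Prod.snd h
    have h0 : f a = f b := by rw [hback a, hback b, h1, h2]
    rw [hFpair, hFpair, h0, h1]
  have hcancel : ∀ a d, F (a + d) = F a → F d = F 0 := by
    intro a; induction a with
    | zero => intro d h; simpa using h
    | succ a ih =>
      intro d h
      apply ih
      apply hFinj
      rw [show a + d + 1 = a + 1 + d by ring]
      exact h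
  -- a positive period exists
  have hex : ∃ d, 0 < d ∧ F d = F 0 := by
    obtain ⟨a, b, hne, heq⟩ := Finite.exists_ne_map_eq_of_infinite F
    rcases Nat.lt_or_ge a b with h | h
    · obtain ⟨d, rfl⟩ := Nat.exists_eq_add_of_lt h
      exact ⟨d + 1, Nat.succ_pos d, hcancel a (d+1) heq.symm⟩
    · have h' : b < a := lt_of_le_of_ne h (Ne.symm hne)
      obtain ⟨d, rfl⟩ := Nat.exists_eq_add_of_lt h'
      exact ⟨d + 1, Nat.succ_pos d, hcancel b (d+1) heq⟩
  obtain ⟨n, ⟨hnpos, hFn⟩, hmin⟩ :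
      ∃ n, (0 < n ∧ F n = F 0) ∧ ∀ d, 0 < d → F d = F 0 → n ≤ d :=
    ⟨Nat.find hex, Nat.find_spec hex, fun d h1 h2 => Nat.find_le ⟨h1, h2⟩⟩
  have hper : ∀ k, F (k + n) = F k := by
    intro k; induction k with
    | zero => simpa using hFn
    | succ k ih =>
      have : F (k + n + 1) = F (k + 1) := by
        rw [show F (k + n + 1) = ((F (k+n)).2, other (F (k+n)).1 (F (k+n)).2) from rfl, ih]
      rw [show k + 1 + n = k + n + 1 by ring]; exact this
  have hfper : ∀ k, f (k + n) = f k := fun k => congrArg Prod.fst (hper k)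
  have hfmul : ∀ m k, f (k + m * n) = f k := by
    intro m; induction m with
    | zero => simp
    | succ m ih => intro k
                   rw [show k + (m+1) * n = (k + m * n) + n by ring, hfper, ih]
  have hfmod : ∀ k, f k = f (k % n) := by
    intro k
    have h := hfmul (k / n) (k % n)
    rw [Nat.mod_add_div' k n] at h
    exact h
  have hn3 : 3 ≤ n := by
    by_contra hc
    push_neg at hc
    have h1 : n ≠ 1 := fun e => (hadj 0).ne' (show f 1 = f 0 from congrArg Prod.fst (e ▸ hFn))
    have h2 : n ≠ 2 := fun e => hne2 0 (show f 2 = f 0 from congrArg Prod.fst (e ▸ hFn))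
    omega
  haveI : NeZero n := ⟨by omega⟩
  -- lift to ZMod n
  set g : ZMod n → V := fun a => f a.val with hgdef
  have hrep : ∀ a : ZMod n, ((a.val : ℕ) : ZMod n) = a := fun a => ZMod.natCast_rightInverse a
  have hg : ∀ k : ℕ, g (k : ZMod n) = f k := by
    intro k
    show f ((k : ZMod n)).val = f k
    rw [ZMod.val_natCast, ← hfmod]
  have hcast1 : ∀ k : ℕ, ((k : ZMod n) + 1) = ((k + 1 : ℕ) : ZMod n) := by
    intro k; push_cast; ring
  have gadj : ∀ a : ZMod n, H.Adj (g a) (g (a + 1)) := by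
    intro a
    obtain ⟨k, rfl⟩ : ∃ k : ℕ, a = (k : ZMod n) := ⟨a.val, (hrep a).symm⟩
    rw [hcast1, hg, hg]; exact hadj k
  have gne1 : ∀ a : ZMod n, g (a + 1) ≠ g a := fun a => (gadj a).ne'
  have gne2 : ∀ a : ZMod n, g (a + 2) ≠ g a := by
    intro a
    obtain ⟨k, rfl⟩ : ∃ k : ℕ, a = (k : ZMod n) := ⟨a.val, (hrep a).symm⟩
    rw [(show ((k : ZMod n) + 2) = ((k + 2 : ℕ) : ZMod n) by push_cast; ring), hg, hg]
    exact hne2 k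
  have gstep : ∀ a : ZMod n, g (a + 2) = other (g a) (g (a + 1)) := by
    intro a
    obtain ⟨k, rfl⟩ : ∃ k : ℕ, a = (k : ZMod n) := ⟨a.val, (hrep a).symm⟩
    rw [(show ((k : ZMod n) + 2) = ((k + 2 : ℕ) : ZMod n) by push_cast; ring), hcast1, hg, hg, hg]
  have gback : ∀ a : ZMod n, g a = other (g (a + 2)) (g (a + 1)) := by
    intro a
    obtain ⟨k, rfl⟩ : ∃ k : ℕ, a = (k : ZMod n) := ⟨a.val, (hrep a).symm⟩
    rw [(show ((k : ZMod n) + 2) = ((k + 2 : ℕ) : ZMod n) by push_cast; ring), hcast1, hg, hg, hg]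
    exact hback k
  have gnbr : ∀ a : ZMod n, H.neighborSet (g a) = {g (a - 1), g (a + 1)} := by
    intro a
    have h1 : H.Adj (g a) (g (a - 1)) := by
      have := (gadj (a - 1)).symm
      rwa [sub_add_cancel] at this
    have h2 : H.Adj (g a) (g (a + 1)) := gadj a
    have hne : g (a - 1) ≠ g (a + 1) := by
      have := gne2 (a - 1)
      rw [show a - 1 + 2 = a + 1 by ring] at this
      exact fun h => this h.symm
    have hsub : ({g (a - 1), g (a + 1)} : Set V) ⊆ H.neighborSet (g a) := by
      intro x hx; rcases hx with rfl | rfl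
      exacts [h1, h2]
    refine (Set.eq_of_subset_of_ncard_le hsub ?_ (Set.toFinite _)).symm
    rw [hreg, Set.ncard_pair hne]
  -- injectivity
  have ginj : Function.Injective g := by
    intro a b hab
    by_contra hne
    have hd0 : b - a ≠ 0 := fun h => hne (sub_eq_zero.mp h).symm
    have hpair : ({g (a - 1), g (a + 1)} : Set V) = {g (b - 1), g (b + 1)} := by
      rw [← gnbr, ← gnbr, hab]
    have hmem : g (a + 1) ∈ ({g (b - 1), g (b + 1)} : Set V) := by
      rw [← hpair]; right; rfl
    rcases hmem with hA | hA
    · -- reversal case : g (a+1) = g (b-1)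
      have hA' : g (a - 1) = g (b + 1) := by
        have hmem2 : g (a - 1) ∈ ({g (b - 1), g (b + 1)} : Set V) := by
          rw [← hpair]; left; rfl
        rcases hmem2 with h | h
        · exfalso
          apply gne2 (a - 1)
          rw [show a - 1 + 2 = a + 1 by ring, hA, ← h]
        · exact h
      have rev : ∀ t : ℕ, g (a + t) = g (b - t) ∧ g (a + t + 1) = g (b - t - 1) := by
        intro t; induction t with
        | zero =>
          refine ⟨by simpa using hab, ?_⟩
          simpa using hA
        | succ t ih =>
          have pc : ((t + 1 : ℕ) : ZMod n) = (t : ZMod n) + 1 := by push_cast; ring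
          rw [pc]
          constructor
          · rw [show a + ((t : ZMod n) + 1) = a + t + 1 by ring,
              show b - ((t : ZMod n) + 1) = b - t - 1 by ring]
            exact ih.2
          · rw [show a + ((t : ZMod n) + 1) + 1 = a + t + 2 by ring,
              show b - ((t : ZMod n) + 1) - 1 = b - t - 2 by ring]
            have e2 : g (b - t - 2) = other (g (b - t)) (g (b - t - 1)) := by
              have h := gback (b - t - 2)
              rw [show b - (t : ZMod n) - 2 + 2 = b - t by ring,
                show b - (t : ZMod n) - 2 + 1 = b - t - 1 by ring] at h
              exact h
            rw [gstep (a + t), e2, ih.1, ih.2]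
      set c : ℕ := (b - a).val with hcdef
      have hc : ((c : ℕ) : ZMod n) = b - a := hrep _
      rcases Nat.even_or_odd c with ⟨t, ht⟩ | ⟨t, ht⟩
      · have h' : ((t : ℕ) : ZMod n) + t = b - a := by
          rw [← hc, ht]; push_cast; ring
        have hbt : b - (t : ZMod n) = a + t := by linear_combination -h'
        have hbt2 : b - (t : ZMod n) - 1 = a + t - 1 := by rw [hbt]
        apply gne2 (a + t - 1)
        rw [show a + (t : ZMod n) - 1 + 2 = a + t + 1 by ring, (rev t).2, hbt2]
      · have h' : 2 * ((t : ℕ) : ZMod n) + 1 = b - a := by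
          rw [← hc, ht]; push_cast; ring
        have hbt : b - (t : ZMod n) = a + t + 1 := by linear_combination -h'
        have h1 := (rev t).1
        rw [hbt] at h1
        exact gne1 (a + t) h1.symm
    · -- translation case : g (a+1) = g (b+1)
      have fwd : ∀ t : ℕ, g (a + t) = g (b + t) ∧ g (a + t + 1) = g (b + t + 1) := by
        intro t; induction t with
        | zero => exact ⟨by simpa using hab, by simpa using hA⟩
        | succ t ih =>
          have pc : ((t + 1 : ℕ) : ZMod n) = (t : ZMod n) + 1 := by push_cast; ring
          rw [pc]
          constructor
          · rw [show a + ((t : ZMod n) + 1) = a + t + 1 by ring,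
              show b + ((t : ZMod n) + 1) = b + t + 1 by ring]
            exact ih.2
          · rw [show a + ((t : ZMod n) + 1) + 1 = a + t + 2 by ring,
              show b + ((t : ZMod n) + 1) + 1 = b + t + 2 by ring,
              gstep (a + t), gstep (b + t), ih.1, ih.2]
      have shift : ∀ x : ZMod n, g x = g (x + (b - a)) := by
        intro x
        have h := (fwd ((x - a).val)).1
        rw [hrep (x - a)] at h
        rw [show a + (x - a) = x by ring, show b + (x - a) = x + (b - a) by ring] at h
        exact h
      set d : ℕ := (b - a).val with hddef
      have hdc : ((d : ℕ) : ZMod n) = b - a := hrep _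
      have hdpos : 0 < d := Nat.pos_of_ne_zero (fun h => hd0 (by rw [← hdc, h, Nat.cast_zero]))
      have hdlt : d < n := ZMod.val_lt _
      have hfd : ∀ k : ℕ, f (k + d) = f k := by
        intro k
        have h := shift (k : ZMod n)
        rw [show (k : ZMod n) + (b - a) = ((k + d : ℕ) : ZMod n) by
          rw [Nat.cast_add, hdc]] at h
        rw [hg, hg] at h
        exact h.symm
      have hFd : F d = F 0 := by
        have e0 : f d = f 0 := by simpa using hfd 0
        have e1 : f (d + 1) = f 1 := by
          have h := hfd 1; rwa [show 1 + d = d + 1 by ring] at h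
        rw [hFpair, hFpair, e0, e1]; norm_num
      exact absurd (hmin d hdpos hFd) (by omega)
  -- surjectivity
  have hx0g : x0 ∈ Set.range g := ⟨0, by
    rw [show (0 : ZMod n) = ((0 : ℕ) : ZMod n) by norm_num, hg]; rfl⟩
  have hclosed : ∀ x ∈ Set.range g, ∀ w, H.Adj x w → w ∈ Set.range g := by
    rintro _ ⟨a, rfl⟩ w hw
    have hmem : w ∈ H.neighborSet (g a) := hw
    rw [gnbr a] at hmem
    rcases hmem with rfl | rfl
    exacts [⟨a - 1, rfl⟩, ⟨a + 1, rfl⟩]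
  have gsurj : Function.Surjective g := by
    intro v
    have key : ∀ (u w : V), H.Walk u w → u ∈ Set.range g → w ∈ Set.range g := by
      intro u w p
      induction p with
      | nil => exact id
      | cons h p ih => exact fun hu => ih (hclosed _ hu _ h)
    exact key x0 v ((hconn x0 v).some) hx0g
  -- build the isomorphism
  obtain ⟨m, rfl⟩ : ∃ m, n = m + 3 := ⟨n - 3, by omega⟩
  refine ⟨m + 3, ⟨SimpleGraph.Iso.symm ⟨Equiv.ofBijective g ⟨ginj, gsurj⟩, ?_⟩⟩⟩
  intro i j
  show H.Adj (g i) (g j) ↔ _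
  rw [show (cycleGraph (m + 3)).Adj i j ↔ i - j = 1 ∨ j - i = 1 from cycleGraph_adj]
  constructor
  · intro h
    have hmem : g j ∈ H.neighborSet (g i) := h
    rw [gnbr i] at hmem
    rcases hmem with h | h
    · left
      have hj := ginj h
      show (i - j : ZMod (m + 3)) = 1
      rw [hj]; exact sub_sub_cancel _ _
    · right
      have hj := ginj h
      show (j - i : ZMod (m + 3)) = 1
      rw [hj]; exact add_sub_cancel_left _ _
  · rintro (h | h)
    · have hij : (i : ZMod (m + 3)) = j + 1 := by
        have h' : (i - j : ZMod (m + 3)) = 1 := h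
        exact sub_eq_iff_eq_add'.mp h'
      rw [hij]; exact (gadj j).symm
    · have hij : (j : ZMod (m + 3)) = i + 1 := by
        have h' : (j - i : ZMod (m + 3)) = 1 := h
        exact sub_eq_iff_eq_add'.mp h'
      rw [hij]; exact gadj i

/-- If `H` is a finite simple connected graph not isomorphic to any
cycle, then every automorphism of `S(H)` maps original vertices to original vertices and
subdivision vertices to subdivision vertices. -/
theorem subdivision_aut_preserves_parts
    {V : Type*} [Fintype V] (H : SimpleGraph V) (hconn : H.Connected)
    (hcyc : ∀ m : ℕ, IsEmpty (H ≃g cycleGraph m))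
    (φ : subdivisionGraph H ≃g subdivisionGraph H) :
    (⇑φ '' (Set.range (Sum.inl : V → V ⊕ H.edgeSet)) = Set.range Sum.inl) ∧
    (⇑φ '' (Set.range (Sum.inr : H.edgeSet → V ⊕ H.edgeSet)) = Set.range Sum.inr) := by
  classical
  have hadj_ll : ∀ v w : V, ¬ (subdivisionGraph H).Adj (Sum.inl v) (Sum.inl w) := by
    intro v w
    simp [subdivisionGraph, SimpleGraph.fromRel_adj]
  have hadj_rr : ∀ e f : H.edgeSet, ¬ (subdivisionGraph H).Adj (Sum.inr e) (Sum.inr f) := by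
    intro e f
    simp [subdivisionGraph, SimpleGraph.fromRel_adj]
  have hadj_lr : ∀ (v : V) (e : H.edgeSet), (subdivisionGraph H).Adj (Sum.inl v) (Sum.inr e) ↔ v ∈ (e : Sym2 V) := by
    intro v e
    simp [subdivisionGraph, SimpleGraph.fromRel_adj]
  have hadj_rl : ∀ (e : H.edgeSet) (v : V), (subdivisionGraph H).Adj (Sum.inr e) (Sum.inl v) ↔ v ∈ (e : Sym2 V) := by
    intro e v; rw [(subdivisionGraph H).adj_comm]; exact hadj_lr v e
  -- edges of S flip `isLeft`
  have hflip : ∀ x y, (subdivisionGraph H).Adj x y → x.isLeft = !y.isLeft := by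
    intro x y h
    cases x with
    | inl v =>
      cases y with
      | inl w => exact absurd h (hadj_ll v w)
      | inr e => rfl
    | inr e =>
      cases y with
      | inl w => rfl
      | inr f => exact absurd h (hadj_rr e f)
  -- S is connected
  obtain ⟨v0⟩ := hconn.nonempty
  have hstepS : ∀ a b : V, H.Adj a b → (subdivisionGraph H).Reachable (Sum.inl a) (Sum.inl b) := by
    intro a b hab
    have he : s(a, b) ∈ H.edgeSet := hab
    have h1 : (subdivisionGraph H).Adj (Sum.inl a) (Sum.inr ⟨s(a, b), he⟩) := (hadj_lr a ⟨s(a, b), he⟩).mpr (by simp)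
    have h2 : (subdivisionGraph H).Adj (Sum.inr ⟨s(a, b), he⟩) (Sum.inl b) := (hadj_rl ⟨s(a, b), he⟩ b).mpr (by simp)
    exact h1.reachable.trans h2.reachable
  have hreachV : ∀ a : V, (subdivisionGraph H).Reachable (Sum.inl v0) (Sum.inl a) := by
    have key : ∀ u w : V, H.Walk u w → (subdivisionGraph H).Reachable (Sum.inl u) (Sum.inl w) := by
      intro u w p
      induction p with
      | nil => exact SimpleGraph.Reachable.refl _
      | cons h p ih => exact (hstepS _ _ h).trans ih
    exact fun a => key v0 a (hconn v0 a).some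
  have hreachS : ∀ x : V ⊕ H.edgeSet, (subdivisionGraph H).Reachable (Sum.inl v0) x := by
    intro x
    cases x with
    | inl a => exact hreachV a
    | inr e =>
      obtain ⟨e', he⟩ := e
      revert he
      induction e' using Sym2.ind with
      | _ a b =>
        intro he
        have hadj : (subdivisionGraph H).Adj (Sum.inl a) (Sum.inr ⟨s(a, b), he⟩) :=
          (hadj_lr a ⟨s(a, b), he⟩).mpr (by simp)
        exact (hreachV a).trans hadj.reachable
  -- agreement propagates along edges and walks
  have hAedge : ∀ x y, (subdivisionGraph H).Adj x y →
      (((φ x).isLeft = x.isLeft) ↔ ((φ y).isLeft = y.isLeft)) := by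
    intro x y h
    have h' : (subdivisionGraph H).Adj (φ x) (φ y) := φ.map_rel_iff.mpr h
    rw [hflip _ _ h, hflip _ _ h']
    simp
    cases φ y <;> cases y <;> simp
  have hAwalk : ∀ x y, (subdivisionGraph H).Walk x y →
      (((φ x).isLeft = x.isLeft) ↔ ((φ y).isLeft = y.isLeft)) := by
    intro x y p
    induction p with
    | nil => exact Iff.rfl
    | cons h p ih => exact (hAedge _ _ h).trans ih
  by_cases h0 : (φ (Sum.inl v0)).isLeft = (Sum.inl v0 : V ⊕ H.edgeSet).isLeft
  · -- φ preserves the parts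
    have hAll : ∀ x, (φ x).isLeft = x.isLeft :=
      fun x => (hAwalk (Sum.inl v0) x (hreachS x).some).mp h0
    have hAll' : ∀ x, (φ.symm x).isLeft = x.isLeft := by
      intro x
      conv_rhs => rw [← φ.apply_symm_apply x]
      exact (hAll (φ.symm x)).symm
    constructor
    · apply Set.ext; intro z
      constructor
      · rintro ⟨_, ⟨v, rfl⟩, rfl⟩
        have hL := hAll (Sum.inl v)
        cases hh : φ (Sum.inl v) with
        | inl w => exact ⟨w, rfl⟩
        | inr e => rw [hh] at hL; simp at hL
      · rintro ⟨w, rfl⟩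
        have hL := hAll' (Sum.inl w)
        cases hh : φ.symm (Sum.inl w) with
        | inl u => exact ⟨Sum.inl u, ⟨u, rfl⟩, by rw [← hh, φ.apply_symm_apply]⟩
        | inr e => rw [hh] at hL; simp at hL
    · apply Set.ext; intro z
      constructor
      · rintro ⟨_, ⟨e, rfl⟩, rfl⟩
        have hL := hAll (Sum.inr e)
        cases hh : φ (Sum.inr e) with
        | inl w => rw [hh] at hL; simp at hL
        | inr f => exact ⟨f, rfl⟩
      · rintro ⟨f, rfl⟩
        have hL := hAll' (Sum.inr f)
        cases hh : φ.symm (Sum.inr f) with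
        | inl u => rw [hh] at hL; simp at hL
        | inr e => exact ⟨Sum.inr e, ⟨e, rfl⟩, by rw [← hh, φ.apply_symm_apply]⟩
  · -- φ swaps the parts: contradiction with H not a cycle
    exfalso
    have hAllN : ∀ x, ¬ ((φ x).isLeft = x.isLeft) :=
      fun x hA => h0 ((hAwalk (Sum.inl v0) x (hreachS x).some).mpr hA)
    -- neighbor set cardinalities in S
    have hnbr_inr : ∀ e : H.edgeSet, ((subdivisionGraph H).neighborSet (Sum.inr e)).ncard = 2 := by
      rintro ⟨e', he⟩
      revert he
      induction e' using Sym2.ind with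
      | _ a b =>
        intro he
        have hab : a ≠ b := (H.mem_edgeSet.mp he).ne
        have hset : (subdivisionGraph H).neighborSet (Sum.inr ⟨s(a, b), he⟩) = {Sum.inl a, Sum.inl b} := by
          ext x
          cases x with
          | inl w =>
            simp only [SimpleGraph.mem_neighborSet, hadj_rl, Set.mem_insert_iff,
              Set.mem_singleton_iff, Sym2.mem_iff, Sum.inl.injEq]
          | inr f =>
            simp [hadj_rr]
        rw [hset, Set.ncard_pair (by simp [hab])]
    have hnbr_inl : ∀ v : V, ((subdivisionGraph H).neighborSet (Sum.inl v)).ncard = (H.neighborSet v).ncard := by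
      intro v
      have h1 : (subdivisionGraph H).neighborSet (Sum.inl v) = Sum.inr '' {e : H.edgeSet | v ∈ (e : Sym2 V)} := by
        ext x
        cases x with
        | inl w => simp [hadj_ll]
        | inr e => simp [hadj_lr]
      rw [h1, Set.ncard_image_of_injective _ Sum.inr_injective]
      have h2 : Subtype.val '' {e : H.edgeSet | v ∈ (e : Sym2 V)} = H.incidenceSet v := by
        ext e'
        simp only [Set.mem_image, Set.mem_setOf_eq, SimpleGraph.incidenceSet]
        constructor
        · rintro ⟨⟨e, he⟩, hv, rfl⟩
          exact ⟨he, hv⟩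
        · rintro ⟨he, hv⟩
          exact ⟨⟨e', he⟩, hv, rfl⟩
      rw [← Set.ncard_image_of_injective _ Subtype.val_injective, h2,
        ← Nat.card_coe_set_eq, ← Nat.card_coe_set_eq]
      exact Nat.card_congr (H.incidenceSetEquivNeighborSet v)
    -- H is 2-regular
    have hreg : ∀ v : V, (H.neighborSet v).ncard = 2 := by
      intro v
      have hL := hAllN (Sum.inl v)
      cases hh : φ (Sum.inl v) with
      | inl w => rw [hh] at hL; simp at hL
      | inr e =>
        have hc : Nat.card ((subdivisionGraph H).neighborSet (Sum.inl v)) = Nat.card ((subdivisionGraph H).neighborSet (Sum.inr e)) := by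
          rw [← hh]
          exact Nat.card_congr (φ.mapNeighborSet (Sum.inl v))
        rw [Nat.card_coe_set_eq, Nat.card_coe_set_eq, hnbr_inl, hnbr_inr] at hc
        exact hc
    obtain ⟨m, ⟨ψ⟩⟩ := cycle_classify H hconn hreg
    exact (hcyc m).false ψ
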